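/- If the weight function w(i,j) can be written as a finite sum w(i,j) = Σ_k f_k(i)·g_k(j), where each f_k is non-increasing and each g_k is non-decreasing, then the lexicographically-first cost-minimizing jump sequence a satisfies a(n-1) ≤ a(n) for all n ≥ 2. -/
import Mathlib


/-- Minimal cost `b(n)` of a jumping pattern from `n` down to `1`:
`b(1)=0` and `b(n) = min_{1 <= k < n} (w(k,n) + b(k))`. -/
noncomputable def minCost (w : ℕ → ℕ → ℝ) : ℕ → ℝ
  | 0 => 0
  | 1 => 0
  | (n+2) =>
    ((Finset.Icc 1 (n+1)).attach).inf'
      ⟨⟨1, by simp⟩, Finset.mem_attach _ _⟩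
      (fun k => w k.1 (n+2) + minCost w k.1)
decreasing_by
  have := Finset.mem_Icc.mp k.2; omega

/-- The lexicographically-first cost-minimizing jump sequence. -/
noncomputable def jumpSeq (w : ℕ → ℕ → ℝ) : ℕ → ℕ := fun n =>
  if n ≤ 1 then 1
  else sInf {k | 1 ≤ k ∧ k < n ∧ w k n + minCost w k = minCost w n}

lemma minCost_le (w : ℕ → ℕ → ℝ) {k n : ℕ} (h1 : 1 ≤ k) (h2 : k < n) :
    minCost w n ≤ w k n + minCost w k := by
  obtain ⟨p, rfl⟩ : ∃ p, n = p + 2 := ⟨n - 2, by omega⟩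
  rw [minCost]
  exact Finset.inf'_le _ (Finset.mem_attach _ ⟨k, by simp [Finset.mem_Icc]; omega⟩)

lemma minCost_exists (w : ℕ → ℕ → ℝ) {n : ℕ} (h : 2 ≤ n) :
    ∃ k, 1 ≤ k ∧ k < n ∧ w k n + minCost w k = minCost w n := by
  obtain ⟨p, rfl⟩ : ∃ p, n = p + 2 := ⟨n - 2, by omega⟩
  obtain ⟨i, _, hi⟩ := Finset.exists_mem_eq_inf'
    (⟨⟨1, by simp⟩, Finset.mem_attach _ _⟩ :
      ((Finset.Icc 1 (p+1)).attach).Nonempty)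
    (fun k => w k.1 (p+2) + minCost w k.1)
  have hm := Finset.mem_Icc.mp i.2
  exact ⟨i.1, hm.1, by omega, by rw [minCost]; exact hi.symm⟩

lemma jumpSeq_mem (w : ℕ → ℕ → ℝ) {n : ℕ} (h : 2 ≤ n) :
    jumpSeq w n ∈ {k | 1 ≤ k ∧ k < n ∧ w k n + minCost w k = minCost w n} := by
  have : ¬ n ≤ 1 := by omega
  rw [jumpSeq]
  simp only [this, if_false]
  exact Nat.sInf_mem (minCost_exists w h)

theorem stmt_0 (w : ℕ → ℕ → ℝ) (m : ℕ) (F G : Fin m → ℕ → ℝ)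
    (hF : ∀ k, Antitone (F k)) (hG : ∀ k, Monotone (G k))
    (hw : ∀ i j, 1 ≤ i → i < j → w i j = ∑ k, F k i * G k j) :
    ∀ n, 2 ≤ n → jumpSeq w (n - 1) ≤ jumpSeq w n := by
  intro n hn
  rcases eq_or_lt_of_le hn with h2 | h3
  · have : jumpSeq w (n - 1) = 1 := by
      rw [jumpSeq]; simp [← h2]
    rw [this]
    exact (jumpSeq_mem w hn).1
  · -- n ≥ 3
    set p := jumpSeq w (n - 1) with hp
    set q := jumpSeq w n with hq
    by_contra hlt
    push_neg at hlt  -- q < p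
    have hn1 : 2 ≤ n - 1 := by omega
    obtain ⟨hp1, hp2, hpcost⟩ := jumpSeq_mem w hn1
    obtain ⟨hq1, hq2, hqcost⟩ := jumpSeq_mem w hn
    rw [← hp] at hp1 hp2 hpcost
    rw [← hq] at hq1 hq2 hqcost
    -- Monge inequality
    have hq1' : (1:ℕ) ≤ q := hq1
    have hqn1 : q < n - 1 := by omega
    have hpn : p < n := by omega
    have monge : w q (n-1) + w p n ≤ w q n + w p (n-1) := by
      rw [hw q (n-1) hq1 hqn1, hw p n hp1 hpn, hw q n hq1 (by omega),
        hw p (n-1) hp1 hp2]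
      rw [← Finset.sum_add_distrib, ← Finset.sum_add_distrib]
      apply Finset.sum_le_sum
      intro k _
      have h1 : F k p ≤ F k q := hF k (le_of_lt hlt)
      have h2 : G k (n-1) ≤ G k n := hG k (by omega)
      nlinarith [mul_nonneg (sub_nonneg.mpr h1) (sub_nonneg.mpr h2)]
    have d1 : minCost w (n-1) ≤ w q (n-1) + minCost w q := minCost_le w hq1 hqn1
    have d2 : minCost w n ≤ w p n + minCost w p := minCost_le w hp1 hpn
    have key : w q (n-1) + minCost w q = minCost w (n-1) := by linarith
    have : p ≤ q := by
      have hmem : q ∈ {k | 1 ≤ k ∧ k < n - 1 ∧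
          w k (n-1) + minCost w k = minCost w (n-1)} := ⟨hq1, hqn1, key⟩
      have : ¬ n - 1 ≤ 1 := by omega
      rw [hp, jumpSeq]
      simp only [this, if_false]
      exact Nat.sInf_le hmem
    omega
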